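/- Let μ be a Borel probability measure on a Euclidean space X satisfying the logarithmic Sobolev inequality with constant ρ > 0. Then for any two Lipschitz functions f : X → [0,∞) and g : X → ℝ, the covariance satisfies |Cov_μ(f,g)| ≤ (‖∇g‖_{L^∞(μ)} / ρ) · sqrt( (∫ f dμ) · (∫ |∇f|²/f dμ) ). -/

import Mathlib

open MeasureTheory Real

set_option linter.unusedSectionVars false
set_option linter.unusedVariables false
set_option linter.unnecessarySimpa false
set_option maxHeartbeats 1000000

variable {X : Type*} [NormedAddCommGroup X] [InnerProductSpace ℝ X] [CompleteSpace X]
  [MeasurableSpace X] [BorelSpace X]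

/-- A probability measure `μ` on a Euclidean space satisfies the logarithmic Sobolev
inequality with constant `ρ`. -/
def LSI (μ : Measure X) (ρ : ℝ) : Prop :=
  ∀ f : X → ℝ, (∀ x, 0 ≤ f x) → LocallyLipschitz f → Integrable f μ →
    ∫ x, f x * Real.log (f x) ∂μ - (∫ x, f x ∂μ) * Real.log (∫ x, f x ∂μ)
      ≤ (1 / (2 * ρ)) * ∫ x, ‖gradient f x‖ ^ 2 / f x ∂μ

lemma norm_gradient_eq (φ : X → ℝ) (x : X) : ‖gradient φ x‖ = ‖fderiv ℝ φ x‖ := by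
  rw [gradient]
  exact (InnerProductSpace.toDual ℝ X).symm.norm_map _

lemma measurable_norm_gradient (φ : X → ℝ) : Measurable (fun x => ‖gradient φ x‖) := by
  simp_rw [norm_gradient_eq]
  exact (measurable_fderiv ℝ φ).norm

lemma young_ineq {u : ℝ} (v : ℝ) (hu : 0 ≤ u) : u * v ≤ u * Real.log u - u + Real.exp v := by
  rcases eq_or_lt_of_le hu with h | h
  · simp [← h]
    positivity
  · have h1 : v - Real.log u + 1 ≤ Real.exp (v - Real.log u) := by
      linarith [Real.add_one_le_exp (v - Real.log u)]
    have h2 : Real.exp (v - Real.log u) = Real.exp v / u := by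
      rw [Real.exp_sub, Real.exp_log h]
    rw [h2] at h1
    have := mul_le_mul_of_nonneg_left h1 hu
    rw [mul_div_cancel₀ _ (ne_of_gt h)] at this
    nlinarith

/-- bound on t log t for 0 ≤ t ≤ m -/
lemma abs_mul_log_le {t m : ℝ} (ht : 0 ≤ t) (htm : t ≤ m) :
    |t * Real.log t| ≤ 1 + m * (1 + |Real.log m|) := by
  have hm : 0 ≤ m := le_trans ht htm
  rcases le_or_gt t 1 with h1 | h1
  · -- t ≤ 1 : t log t ∈ [-1, 0]
    rcases eq_or_lt_of_le ht with h0 | h0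
    · simp [← h0]; positivity
    · have hlog : Real.log t ≤ 0 := Real.log_nonpos ht h1
      have hineq : -Real.log t ≤ 1/t - 1 := by
        have := Real.log_le_sub_one_of_pos (x := t⁻¹) (by positivity)
        rw [Real.log_inv] at this
        rw [one_div]; linarith
      have : t * (-Real.log t) ≤ t * (1/t - 1) := by
        apply mul_le_mul_of_nonneg_left hineq ht
      rw [mul_sub, mul_one_div, div_self (ne_of_gt h0)] at this
      have habs : |t * Real.log t| = t * (-Real.log t) := by
        rw [abs_of_nonpos (mul_nonpos_of_nonneg_of_nonpos ht hlog)]; ring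
      have : t * (-Real.log t) ≤ 1 := by nlinarith
      have hpos : 0 ≤ m * (1 + |Real.log m|) := by positivity
      linarith [habs ▸ this]
  · -- 1 < t ≤ m
    have hlog : 0 ≤ Real.log t := Real.log_nonneg h1.le
    have h2 : Real.log t ≤ Real.log m := Real.log_le_log (by linarith) htm
    have h3 : Real.log m ≤ |Real.log m| := le_abs_self _
    have habs : |t * Real.log t| = t * Real.log t := abs_of_nonneg (by positivity)
    rw [habs]
    nlinarith

/-- gradient of two-sided truncation `max (min g n) (-n)`. -/
lemma norm_gradient_trunc_le (g : X → ℝ) (hg : Continuous g) {n : ℝ} (hn : 0 ≤ n) (x : X) :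
    ‖gradient (fun y => max (min (g y) n) (-n)) x‖ ≤ ‖gradient g x‖ := by
  have hnn : -n ≤ n := by linarith
  rcases lt_trichotomy (g x) n with h | h | h
  · rcases lt_trichotomy (g x) (-n) with h' | h' | h'
    · -- g x < -n : locally const -n
      have hev : (fun y => max (min (g y) n) (-n)) =ᶠ[nhds x] (fun _ => -n) := by
        filter_upwards [hg.continuousAt.eventually_lt_const h'] with y hy
        rw [min_eq_left (le_trans hy.le hnn), max_eq_right hy.le]
      rw [norm_gradient_eq, hev.fderiv_eq, fderiv_fun_const]
      simp
    · -- g x = -n : global min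
      have hmin : IsLocalMin (fun y => max (min (g y) n) (-n)) x := by
        apply Filter.Eventually.of_forall
        intro y
        show max (min (g x) n) (-n) ≤ max (min (g y) n) (-n)
        rw [h', min_eq_left hnn, max_self]
        exact le_max_right _ _
      rw [norm_gradient_eq, hmin.fderiv_eq_zero]
      simp
    · -- -n < g x < n : locally equal to g
      have hev : (fun y => max (min (g y) n) (-n)) =ᶠ[nhds x] g := by
        filter_upwards [hg.continuousAt.eventually_lt_const h,
          hg.continuousAt.eventually_const_lt h'] with y hy hy'
        rw [min_eq_left hy.le, max_eq_left hy'.le]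
      rw [norm_gradient_eq, norm_gradient_eq, hev.fderiv_eq]
  · -- g x = n : global max
    have hmax : IsLocalMax (fun y => max (min (g y) n) (-n)) x := by
      apply Filter.Eventually.of_forall
      intro y
      show max (min (g y) n) (-n) ≤ max (min (g x) n) (-n)
      rw [h, min_self, max_eq_left hnn]
      exact max_le (min_le_right _ _) hnn
    rw [norm_gradient_eq, hmax.fderiv_eq_zero]
    simp
  · -- g x > n : locally const n
    have hev : (fun y => max (min (g y) n) (-n)) =ᶠ[nhds x] (fun _ => n) := by
      filter_upwards [hg.continuousAt.eventually_const_lt h] with y hy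
      rw [min_eq_right hy.le, max_eq_left hnn]
    rw [norm_gradient_eq, hev.fderiv_eq, fderiv_fun_const]
    simp

/-- chain rule bound for `exp (s * φ)`. -/
lemma norm_gradient_exp_le (φ : X → ℝ) (s : ℝ) (x : X) :
    ‖gradient (fun y => Real.exp (s * φ y)) x‖
      ≤ |s| * Real.exp (s * φ x) * ‖gradient φ x‖ := by
  rcases eq_or_ne s 0 with hs | hs
  · subst hs
    have : (fun y : X => Real.exp (0 * φ y)) = fun _ => (1 : ℝ) := by
      funext y; simp
    rw [norm_gradient_eq, this, fderiv_fun_const]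
    simp
  by_cases hd : DifferentiableAt ℝ φ x
  · have h1 : HasFDerivAt (fun y => s * φ y) (s • fderiv ℝ φ x) x :=
      hd.hasFDerivAt.const_mul s
    have h2 : HasFDerivAt (fun y => Real.exp (s * φ y))
        (Real.exp (s * φ x) • (s • fderiv ℝ φ x)) x := h1.exp
    rw [norm_gradient_eq, norm_gradient_eq, h2.fderiv]
    rw [norm_smul, norm_smul]
    simp [Real.norm_eq_abs, abs_of_nonneg (Real.exp_nonneg _)]
    ring_nf
    exact le_refl _
  · -- φ not differentiable at x ⇒ neither is exp (s φ)
    have hnd : ¬ DifferentiableAt ℝ (fun y => Real.exp (s * φ y)) x := by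
      intro hc
      apply hd
      have hlog : DifferentiableAt ℝ (fun y => s⁻¹ * Real.log (Real.exp (s * φ y))) x :=
        (hc.log (Real.exp_ne_zero _)).const_mul s⁻¹
      have heq : (fun y => s⁻¹ * Real.log (Real.exp (s * φ y))) = φ := by
        funext y
        rw [Real.log_exp]
        field_simp
      rwa [heq] at hlog
    rw [norm_gradient_eq, fderiv_zero_of_not_differentiableAt hnd]
    simp
    positivity

theorem herbst (μ : Measure X) [IsProbabilityMeasure μ]
    (ρ : ℝ) (hρ : 0 < ρ) (hLSI : LSI μ ρ)
    (φ : X → ℝ) (L : NNReal) (hL : LipschitzWith L φ)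
    (B M : ℝ) (hB : ∀ x, |φ x| ≤ B) (hM0 : 0 ≤ M)
    (hM : ∀ᵐ x ∂μ, ‖gradient φ x‖ ≤ M) (hmean : ∫ x, φ x ∂μ = 0)
    {s : ℝ} (hs : 0 < s) :
    Real.log (∫ x, Real.exp (s * φ x) ∂μ) ≤ s ^ 2 * M ^ 2 / (2 * ρ) := by
  have hφc : Continuous φ := hL.continuous
  set H : ℝ → ℝ := fun t => ∫ x, Real.exp (t * φ x) ∂μ with hH
  set D : ℝ → ℝ := fun t => ∫ x, φ x * Real.exp (t * φ x) ∂μ with hD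
  have hexp_bd : ∀ t x, Real.exp (t * φ x) ≤ Real.exp (|t| * B) := by
    intro t x
    apply Real.exp_le_exp.mpr
    calc t * φ x ≤ |t * φ x| := le_abs_self _
    _ = |t| * |φ x| := abs_mul _ _
    _ ≤ |t| * B := by
        apply mul_le_mul_of_nonneg_left (hB x) (abs_nonneg _)
  have hFmeas : ∀ t : ℝ, AEStronglyMeasurable (fun x => Real.exp (t * φ x)) μ :=
    fun t => (Real.continuous_exp.comp (continuous_const.mul hφc)).aestronglyMeasurable
  have hFint : ∀ t : ℝ, Integrable (fun x => Real.exp (t * φ x)) μ := by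
    intro t
    apply (integrable_const (Real.exp (|t| * B))).mono' (hFmeas t)
    filter_upwards with x
    rw [Real.norm_eq_abs, abs_of_nonneg (Real.exp_nonneg _)]
    exact hexp_bd t x
  have hφint : Integrable φ μ := by
    apply (integrable_const B).mono' hφc.aestronglyMeasurable
    filter_upwards with x
    rw [Real.norm_eq_abs]; exact hB x
  -- derivative of H
  have hH' : ∀ t : ℝ, HasDerivAt H (D t) t := by
    intro t
    have key := hasDerivAt_integral_of_dominated_loc_of_deriv_le
      (F := fun t x => Real.exp (t * φ x)) (F' := fun t x => φ x * Real.exp (t * φ x))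
      (x₀ := t) (bound := fun _ => B * Real.exp ((|t| + 1) * B)) (μ := μ) (s := Metric.ball t 1)
      (Metric.ball_mem_nhds t one_pos) (Filter.Eventually.of_forall (fun u => hFmeas u)) (hFint t)
      ((hφc.aestronglyMeasurable).mul (hFmeas t)) ?_ (integrable_const _) ?_
    · exact key.2
    · filter_upwards with x u hu
      rw [Real.norm_eq_abs, abs_mul, abs_of_nonneg (Real.exp_nonneg _)]
      have h1 : |u| ≤ |t| + 1 := by
        have := mem_ball_iff_norm.mp hu
        rw [Real.norm_eq_abs] at this
        calc |u| = |t + (u - t)| := by ring_nf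
        _ ≤ |t| + |u - t| := abs_add_le _ _
        _ ≤ |t| + 1 := by linarith
      have h2 : Real.exp (u * φ x) ≤ Real.exp ((|t| + 1) * B) := by
        apply Real.exp_le_exp.mpr
        have hx1 : u * φ x ≤ |u| * |φ x| := by
          calc u * φ x ≤ |u * φ x| := le_abs_self _
          _ = |u| * |φ x| := abs_mul _ _
        have hx2 : |u| * |φ x| ≤ (|t| + 1) * B :=
          mul_le_mul h1 (hB x) (abs_nonneg _) (by positivity)
        linarith
      exact mul_le_mul (hB x) h2 (Real.exp_nonneg _) ((abs_nonneg _).trans (hB x))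
    · filter_upwards with x
      intro u _
      have h := (hasDerivAt_mul_const (φ x) (x := u)).exp
      simpa [mul_comm] using h
  have Hpos : ∀ t : ℝ, 0 < H t := by
    intro t
    have h1 : ∀ x, Real.exp (-(|t| * B)) ≤ Real.exp (t * φ x) := by
      intro x
      apply Real.exp_le_exp.mpr
      have : -(t * φ x) ≤ |t| * B := by
        calc -(t * φ x) ≤ |t * φ x| := neg_le_abs _
        _ = |t| * |φ x| := abs_mul _ _
        _ ≤ |t| * B := mul_le_mul_of_nonneg_left (hB x) (abs_nonneg _)
      linarith
    have h2 : Real.exp (-(|t| * B)) ≤ H t := by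
      have := integral_mono (integrable_const (Real.exp (-(|t| * B)))) (hFint t) h1
      simpa using this
    exact lt_of_lt_of_le (Real.exp_pos _) h2
  have hH0 : H 0 = 1 := by simp [hH]
  have hD0 : D 0 = 0 := by simpa [hD] using hmean
  set u : ℝ → ℝ := fun t => Real.log (H t) with hu
  have hu' : ∀ t : ℝ, HasDerivAt u (D t / H t) t :=
    fun t => (hH' t).log (ne_of_gt (Hpos t))
  -- LSI applied to exp (t φ)
  have LSIstep : ∀ t : ℝ, t * D t - H t * Real.log (H t)
      ≤ (1 / (2 * ρ)) * (t ^ 2 * M ^ 2 * H t) := by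
    intro t
    set F : X → ℝ := fun x => Real.exp (t * φ x) with hF
    have hF0 : ∀ x, 0 ≤ F x := fun x => Real.exp_nonneg _
    have hFlip : LocallyLipschitz F := by
      have h1 : LocallyLipschitz (fun r : ℝ => Real.exp (t * r)) :=
        (Real.contDiff_exp.comp (contDiff_const.mul contDiff_id)).locallyLipschitz
      exact h1.comp hL.locallyLipschitz
    have hlsi := hLSI F hF0 hFlip (hFint t)
    have hLHS : ∫ x, F x * Real.log (F x) ∂μ = t * D t := by
      have : ∀ x, F x * Real.log (F x) = t * (φ x * Real.exp (t * φ x)) := by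
        intro x; rw [hF]; simp only []; rw [Real.log_exp]; ring
      simp_rw [this]
      rw [MeasureTheory.integral_const_mul]
    have hG_bd : ∀ᵐ x ∂μ, ‖gradient F x‖ ^ 2 / F x ≤ t ^ 2 * M ^ 2 * Real.exp (t * φ x) := by
      filter_upwards [hM] with x hx
      have h1 : ‖gradient F x‖ ≤ |t| * Real.exp (t * φ x) * M := by
        calc ‖gradient F x‖ ≤ |t| * Real.exp (t * φ x) * ‖gradient φ x‖ :=
          norm_gradient_exp_le φ t x
        _ ≤ |t| * Real.exp (t * φ x) * M := by
            apply mul_le_mul_of_nonneg_left hx (by positivity)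
      rw [div_le_iff₀ (Real.exp_pos _)]
      have h2 : ‖gradient F x‖ ^ 2 ≤ (|t| * Real.exp (t * φ x) * M) ^ 2 :=
        pow_le_pow_left₀ (norm_nonneg _) h1 2
      calc ‖gradient F x‖ ^ 2 ≤ (|t| * Real.exp (t * φ x) * M) ^ 2 := h2
      _ = t ^ 2 * M ^ 2 * Real.exp (t * φ x) * Real.exp (t * φ x) := by
          rw [mul_pow, mul_pow, sq_abs]; ring
    have hGmeas : AEStronglyMeasurable (fun x => ‖gradient F x‖ ^ 2 / F x) μ := by
      apply Measurable.aestronglyMeasurable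
      exact ((measurable_norm_gradient F).pow_const 2).div
        (Real.measurable_exp.comp (measurable_const.mul hφc.measurable))
    have hG0 : ∀ x, 0 ≤ ‖gradient F x‖ ^ 2 / F x :=
      fun x => div_nonneg (by positivity) (Real.exp_nonneg _)
    have hGint : Integrable (fun x => ‖gradient F x‖ ^ 2 / F x) μ := by
      apply (integrable_const (t ^ 2 * M ^ 2 * Real.exp (|t| * B))).mono' hGmeas
      filter_upwards [hG_bd] with x hx
      rw [Real.norm_eq_abs, abs_of_nonneg (hG0 x)]
      calc ‖gradient F x‖ ^ 2 / F x ≤ t ^ 2 * M ^ 2 * Real.exp (t * φ x) := hx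
      _ ≤ t ^ 2 * M ^ 2 * Real.exp (|t| * B) :=
          mul_le_mul_of_nonneg_left (hexp_bd t x) (by positivity)
    have hRHS : ∫ x, ‖gradient F x‖ ^ 2 / F x ∂μ ≤ t ^ 2 * M ^ 2 * H t := by
      have h3 : ∫ x, t ^ 2 * M ^ 2 * Real.exp (t * φ x) ∂μ = t ^ 2 * M ^ 2 * H t :=
        MeasureTheory.integral_const_mul _ _
      rw [← h3]
      exact integral_mono_ae hGint ((hFint t).const_mul _) hG_bd
    rw [hLHS] at hlsi
    calc t * D t - H t * Real.log (H t) ≤ (1 / (2 * ρ)) * ∫ x, ‖gradient F x‖ ^ 2 / F x ∂μ :=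
      hlsi
    _ ≤ (1 / (2 * ρ)) * (t ^ 2 * M ^ 2 * H t) := by
        apply mul_le_mul_of_nonneg_left hRHS (by positivity)
  -- differential inequality
  set c : ℝ := M ^ 2 / (2 * ρ) with hc
  have hc0 : 0 ≤ c := by positivity
  have key : ∀ t : ℝ, t * (D t / H t) - u t ≤ c * t ^ 2 := by
    intro t
    have h1 := LSIstep t
    have h2 := Hpos t
    rw [mul_div_assoc', sub_le_iff_le_add, div_le_iff₀ h2]
    have hut : u t = Real.log (H t) := rfl
    have hcc : (1 / (2 * ρ)) * (t ^ 2 * M ^ 2 * H t) = c * t ^ 2 * H t := by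
      rw [hc]; ring
    rw [hut]
    nlinarith [h1, hcc]
  -- w̃ := c t - u t / t is monotone on (0, ∞)
  set w : ℝ → ℝ := fun t => c * t - u t / t with hw
  have hw' : ∀ t : ℝ, 0 < t → HasDerivAt w (c - ((D t / H t) * t - u t) / t ^ 2) t := by
    intro t ht
    have h := ((hasDerivAt_id t).const_mul c).sub
      ((hu' t).div (hasDerivAt_id t) (ne_of_gt ht))
    exact (by simpa using h : HasDerivAt ((fun y => c * y) - u / id) (c - ((D t / H t) * t - u t) / t ^ 2) t)
  have hmono : MonotoneOn w (Set.Ioi (0 : ℝ)) := by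
    apply monotoneOn_of_deriv_nonneg (convex_Ioi 0)
    · intro t ht
      exact ((hw' t ht).continuousAt).continuousWithinAt
    · intro t ht
      rw [interior_Ioi] at ht
      exact (hw' t ht).differentiableAt.differentiableWithinAt
    · intro t ht
      rw [interior_Ioi] at ht
      rw [(hw' t ht).deriv]
      have h1 := key t
      rw [sub_nonneg, div_le_iff₀ (pow_pos ht 2)]
      nlinarith [key t]
  -- slope limit at 0
  have hu0 : u 0 = 0 := by rw [hu]; simp [hH0]
  have hslope : Filter.Tendsto (fun ε => u ε / ε) (nhdsWithin 0 (Set.Ioi 0)) (nhds 0) := by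
    have h1 : Filter.Tendsto (slope u 0) (nhdsWithin 0 {(0:ℝ)}ᶜ) (nhds 0) := by
      have := hasDerivAt_iff_tendsto_slope.mp (hu' 0)
      rwa [hD0, zero_div] at this
    have h2 : Filter.Tendsto (slope u 0) (nhdsWithin 0 (Set.Ioi 0)) (nhds 0) :=
      h1.mono_left (nhdsWithin_mono _ (fun x hx => ne_of_gt hx))
    apply h2.congr'
    filter_upwards [self_mem_nhdsWithin] with ε hε
    rw [slope_def_field, hu0]
    simp
  -- conclude
  have hfinal : u s / s ≤ c * s := by
    have hev : ∀ᶠ ε in nhdsWithin 0 (Set.Ioi 0), u s / s ≤ c * s - c * ε + u ε / ε := by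
      filter_upwards [Ioo_mem_nhdsGT_of_mem (Set.left_mem_Ico.mpr hs)] with ε hε
      have h1 : w ε ≤ w s := hmono hε.1 hs (le_of_lt hε.2)
      rw [hw] at h1
      simp only at h1
      linarith
    have hlim : Filter.Tendsto (fun ε => c * s - c * ε + u ε / ε)
        (nhdsWithin 0 (Set.Ioi 0)) (nhds (c * s)) := by
      have h2 : Filter.Tendsto (fun ε : ℝ => c * s - c * ε) (nhdsWithin 0 (Set.Ioi 0))
          (nhds (c * s)) := by
        have hcont : Continuous (fun ε : ℝ => c * s - c * ε) := by continuity
        have h3 := hcont.tendsto 0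
        simp only [mul_zero, sub_zero] at h3
        exact h3.mono_left nhdsWithin_le_nhds
      simpa using h2.add hslope
    exact ge_of_tendsto hlim hev
  have : u s ≤ c * s ^ 2 := by
    rw [div_le_iff₀ hs] at hfinal
    calc u s ≤ c * s * s := hfinal
    _ = c * s ^ 2 := by ring
  calc Real.log (H s) = u s := rfl
  _ ≤ c * s ^ 2 := this
  _ = s ^ 2 * M ^ 2 / (2 * ρ) := by rw [hc]; ring

theorem entropy_duality (μ : Measure X) [IsProbabilityMeasure μ]
    (f h : X → ℝ) (hf0 : ∀ x, 0 ≤ f x)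
    (hfint : Integrable f μ) (hflog : Integrable (fun x => f x * Real.log (f x)) μ)
    (hhmeas : AEStronglyMeasurable h μ) (C : ℝ) (hC : ∀ x, |h x| ≤ C)
    (ha : 0 < ∫ x, f x ∂μ) :
    ∫ x, f x * h x ∂μ ≤ (∫ x, f x * Real.log (f x) ∂μ
      - (∫ x, f x ∂μ) * Real.log (∫ x, f x ∂μ))
      + (∫ x, f x ∂μ) * Real.log (∫ x, Real.exp (h x) ∂μ) := by
  set a : ℝ := ∫ x, f x ∂μ with haa
  have hexpmeas : AEStronglyMeasurable (fun x => Real.exp (h x)) μ :=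
    Real.continuous_exp.comp_aestronglyMeasurable hhmeas
  have hexpint : Integrable (fun x => Real.exp (h x)) μ := by
    apply (integrable_const (Real.exp C)).mono' hexpmeas
    filter_upwards with x
    rw [Real.norm_eq_abs, abs_of_nonneg (Real.exp_nonneg _)]
    exact Real.exp_le_exp.mpr ((le_abs_self _).trans (hC x))
  set b : ℝ := ∫ x, Real.exp (h x) ∂μ with hbb
  have hb : 0 < b := by
    have h1 : ∀ x, Real.exp (-C) ≤ Real.exp (h x) := by
      intro x
      exact Real.exp_le_exp.mpr (by linarith [abs_le.mp (hC x)])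
    have h2 := integral_mono (integrable_const (Real.exp (-C))) hexpint h1
    simp only [integral_const, measure_univ, ENNReal.toReal_one, probReal_univ, smul_eq_mul, one_mul] at h2
    exact lt_of_lt_of_le (Real.exp_pos _) h2
  -- pointwise Young inequality
  have hpt : ∀ x, f x * h x ≤ f x * Real.log (f x) - f x * Real.log a - f x
      + (a / b) * Real.exp (h x) + f x * Real.log b := by
    intro x
    rcases eq_or_lt_of_le (hf0 x) with h0 | h0
    · rw [← h0]
      simp
      positivity
    · have hy := young_ineq (u := f x / a) (h x - Real.log b) (by positivity)
      have e1 : Real.log (f x / a) = Real.log (f x) - Real.log a :=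
        Real.log_div (ne_of_gt h0) (ne_of_gt ha)
      have e2 : Real.exp (h x - Real.log b) = Real.exp (h x) / b := by
        rw [Real.exp_sub, Real.exp_log hb]
      rw [e1, e2] at hy
      have ha' : a ≠ 0 := ne_of_gt ha
      have hb' : b ≠ 0 := ne_of_gt hb
      have h3 : f x * (h x - Real.log b)
          ≤ f x * (Real.log (f x) - Real.log a) - f x + a / b * Real.exp (h x) := by
        calc f x * (h x - Real.log b) = a * (f x / a * (h x - Real.log b)) := by
              field_simp
        _ ≤ a * (f x / a * (Real.log (f x) - Real.log a) - f x / a + Real.exp (h x) / b) :=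
              mul_le_mul_of_nonneg_left hy (le_of_lt ha)
        _ = f x * (Real.log (f x) - Real.log a) - f x + a / b * Real.exp (h x) := by
              field_simp
      nlinarith [h3]
  -- integrate
  have hfhint : Integrable (fun x => f x * h x) μ := by
    apply (hfint.const_mul C).mono' (hfint.aestronglyMeasurable.mul hhmeas)
    filter_upwards with x
    show ‖f x * h x‖ ≤ C * f x
    rw [Real.norm_eq_abs, abs_mul, abs_of_nonneg (hf0 x)]
    calc f x * |h x| ≤ f x * C := mul_le_mul_of_nonneg_left (hC x) (hf0 x)
    _ = C * f x := mul_comm _ _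
  have hRHSint : Integrable (fun x => f x * Real.log (f x) - f x * Real.log a - f x
      + (a / b) * Real.exp (h x) + f x * Real.log b) μ :=
    (((hflog.sub (hfint.mul_const _)).sub hfint).add (hexpint.const_mul _)).add
      (hfint.mul_const _)
  have hint := integral_mono_ae hfhint hRHSint (Filter.Eventually.of_forall hpt)
  rw [integral_add, integral_add, integral_sub, integral_sub] at hint
  · rw [integral_mul_const, integral_mul_const, MeasureTheory.integral_const_mul] at hint
    have : a / b * b = a := div_mul_cancel₀ a (ne_of_gt hb)
    rw [← hbb, ← haa, this] at hint
    linarith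
  · exact hflog
  · exact hfint.mul_const _
  · exact (hflog.sub (hfint.mul_const _))
  · exact hfint
  · exact ((hflog.sub (hfint.mul_const _)).sub hfint)
  · exact hexpint.const_mul _
  · exact (((hflog.sub (hfint.mul_const _)).sub hfint).add (hexpint.const_mul _))
  · exact hfint.mul_const _

lemma le_two_sqrt_of_forall {Cv P Q : ℝ} (hP : 0 ≤ P) (hQ : 0 ≤ Q)
    (h : ∀ s : ℝ, 0 < s → Cv ≤ P / s + Q * s) : Cv ≤ 2 * Real.sqrt (P * Q) := by
  have hsqrt : 0 ≤ 2 * Real.sqrt (P * Q) := by positivity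
  rcases eq_or_lt_of_le hQ with hQ0 | hQ0
  · -- Q = 0 : Cv ≤ ε for all ε > 0
    have hCv : Cv ≤ 0 := by
      apply le_of_forall_pos_le_add
      intro ε hε
      have hspos : 0 < P / ε + 1 := by positivity
      have h1 := h (P / ε + 1) hspos
      rw [← hQ0] at h1
      have h2 : P / (P / ε + 1) ≤ ε := by
        rw [div_le_iff₀ hspos]
        have : ε * (P / ε + 1) = P + ε := by field_simp
        rw [this]; linarith
      simp at h1
      linarith
    linarith
  rcases eq_or_lt_of_le hP with hP0 | hP0
  · -- P = 0
    have hCv : Cv ≤ 0 := by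
      apply le_of_forall_pos_le_add
      intro ε hε
      have hspos : 0 < ε / Q := by positivity
      have h1 := h (ε / Q) hspos
      rw [← hP0] at h1
      rw [zero_div, zero_add, mul_div_cancel₀ _ (ne_of_gt hQ0)] at h1
      linarith
    linarith
  · -- P, Q > 0
    set s : ℝ := Real.sqrt P / Real.sqrt Q with hs
    have hsP : 0 < Real.sqrt P := Real.sqrt_pos.mpr hP0
    have hsQ : 0 < Real.sqrt Q := Real.sqrt_pos.mpr hQ0
    have hspos : 0 < s := by positivity
    have h1 := h s hspos
    have e1 : P / s + Q * s = 2 * (Real.sqrt P * Real.sqrt Q) := by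
      rw [hs]
      have eP : Real.sqrt P * Real.sqrt P = P := Real.mul_self_sqrt hP
      have eQ : Real.sqrt Q * Real.sqrt Q = Q := Real.mul_self_sqrt hQ
      field_simp
      nlinarith [eP, eQ]
    rw [e1] at h1
    rwa [Real.sqrt_mul hP]

theorem cov_bdd_one_side (μ : Measure X) [IsProbabilityMeasure μ]
    (ρ : ℝ) (hρ : 0 < ρ) (hLSI : LSI μ ρ)
    (f g : X → ℝ) (hf0 : ∀ x, 0 ≤ f x) {Lf Lg : NNReal}
    (hfL : LipschitzWith Lf f) (hgL : LipschitzWith Lg g)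
    (m B Mg : ℝ) (hfb : ∀ x, f x ≤ m) (hgb : ∀ x, |g x| ≤ B)
    (hMg0 : 0 ≤ Mg) (hMg : ∀ᵐ x ∂μ, ‖gradient g x‖ ≤ Mg)
    (ha : 0 < ∫ x, f x ∂μ) {s : ℝ} (hs : 0 < s) :
    ∫ x, f x * g x ∂μ - (∫ x, f x ∂μ) * ∫ x, g x ∂μ
      ≤ ((∫ x, ‖gradient f x‖ ^ 2 / f x ∂μ) / (2 * ρ)) / s
        + ((∫ x, f x ∂μ) * Mg ^ 2 / (2 * ρ)) * s := by
  have hfc : Continuous f := hfL.continuous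
  have hgc : Continuous g := hgL.continuous
  have hfint : Integrable f μ := by
    apply (integrable_const m).mono' hfc.aestronglyMeasurable
    filter_upwards with x
    rw [Real.norm_eq_abs, abs_of_nonneg (hf0 x)]; exact hfb x
  have hgint : Integrable g μ := by
    apply (integrable_const B).mono' hgc.aestronglyMeasurable
    filter_upwards with x
    rw [Real.norm_eq_abs]; exact hgb x
  set a : ℝ := ∫ x, f x ∂μ with haa
  set cg : ℝ := ∫ x, g x ∂μ with hcg
  have hcgB : |cg| ≤ B := by
    rw [hcg]
    calc |∫ x, g x ∂μ| ≤ ∫ x, |g x| ∂μ := by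
          simpa [Real.norm_eq_abs] using norm_integral_le_integral_norm (μ := μ) g
    _ ≤ ∫ x, B ∂μ := integral_mono hgint.abs (integrable_const B) (fun x => hgb x)
    _ = B := by simp
  set φ : X → ℝ := fun x => g x - cg with hφ
  have hφL : LipschitzWith (1 * Lg) φ := by
    have hout : LipschitzWith 1 (fun y : ℝ => y - cg) :=
      LipschitzWith.of_dist_le_mul (fun x y => by
        rw [dist_sub_right]; simp)
    exact hout.comp hgL
  have hφB : ∀ x, |φ x| ≤ B + B := by
    intro x
    calc |g x - cg| ≤ |g x| + |cg| := abs_sub _ _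
    _ ≤ B + B := add_le_add (hgb x) hcgB
  have hφgrad : ∀ x, ‖gradient φ x‖ = ‖gradient g x‖ := by
    intro x
    rw [norm_gradient_eq, norm_gradient_eq, hφ]
    rw [fderiv_sub_const]
  have hφM : ∀ᵐ x ∂μ, ‖gradient φ x‖ ≤ Mg := by
    filter_upwards [hMg] with x hx
    rw [hφgrad]; exact hx
  have hφmean : ∫ x, φ x ∂μ = 0 := by
    rw [hφ]
    rw [integral_sub hgint (integrable_const cg)]
    simp [hcg]
  have hherbst := herbst μ ρ hρ hLSI φ (1 * Lg) hφL (B + B) Mg hφB hMg0 hφM hφmean hs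
  -- entropy duality with h = s * φ
  have hflog : Integrable (fun x => f x * Real.log (f x)) μ := by
    apply (integrable_const (1 + m * (1 + |Real.log m|))).mono'
    · exact (hfc.measurable.mul (Real.measurable_log.comp hfc.measurable)).aestronglyMeasurable
    · filter_upwards with x
      rw [Real.norm_eq_abs]
      exact abs_mul_log_le (hf0 x) (hfb x)
  have hdual := entropy_duality μ f (fun x => s * φ x) hf0 hfint hflog
    ((continuous_const.mul (hgc.sub continuous_const)).aestronglyMeasurable)
    (s * (B + B)) (fun x => by
      rw [abs_mul, abs_of_pos hs]
      exact mul_le_mul_of_nonneg_left (hφB x) (le_of_lt hs)) ha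
  -- LSI for f
  have hlsif := hLSI f hf0 hfL.locallyLipschitz hfint
  set I : ℝ := ∫ x, ‖gradient f x‖ ^ 2 / f x ∂μ with hI
  -- compute ∫ f * (s * φ)
  have hfgint : Integrable (fun x => f x * g x) μ := by
    apply (integrable_const (m * B)).mono'
      (hfc.aestronglyMeasurable.mul hgc.aestronglyMeasurable)
    filter_upwards with x
    show ‖f x * g x‖ ≤ m * B
    rw [Real.norm_eq_abs, abs_mul, abs_of_nonneg (hf0 x)]
    exact mul_le_mul (hfb x) (hgb x) (abs_nonneg _) (le_trans (hf0 x) (hfb x))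
  have hcompute : ∫ x, f x * (s * φ x) ∂μ = s * ((∫ x, f x * g x ∂μ) - a * cg) := by
    have e1 : ∀ x, f x * (s * φ x) = s * (f x * g x - f x * cg) := by
      intro x; rw [hφ]; ring
    simp_rw [e1]
    rw [MeasureTheory.integral_const_mul, integral_sub hfgint (hfint.mul_const cg),
      integral_mul_const]
  rw [hcompute] at hdual
  -- assemble
  have hherbst' : a * Real.log (∫ x, Real.exp (s * φ x) ∂μ) ≤ a * (s ^ 2 * Mg ^ 2 / (2 * ρ)) :=
    mul_le_mul_of_nonneg_left hherbst (le_of_lt ha)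
  have hkey : s * ((∫ x, f x * g x ∂μ) - a * cg)
      ≤ I / (2 * ρ) + a * (s ^ 2 * Mg ^ 2 / (2 * ρ)) := by
    have h1 : (∫ x, f x * Real.log (f x) ∂μ) - a * Real.log a ≤ (1 / (2 * ρ)) * I := hlsif
    calc s * ((∫ x, f x * g x ∂μ) - a * cg)
        ≤ ((∫ x, f x * Real.log (f x) ∂μ) - a * Real.log a)
          + a * Real.log (∫ x, Real.exp (s * φ x) ∂μ) := hdual
    _ ≤ (1 / (2 * ρ)) * I + a * (s ^ 2 * Mg ^ 2 / (2 * ρ)) := add_le_add h1 hherbst'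
    _ = I / (2 * ρ) + a * (s ^ 2 * Mg ^ 2 / (2 * ρ)) := by ring
  -- divide by s
  have h2 : (∫ x, f x * g x ∂μ) - a * cg
      ≤ (I / (2 * ρ) + a * (s ^ 2 * Mg ^ 2 / (2 * ρ))) / s := by
    rw [le_div_iff₀ hs]
    calc ((∫ x, f x * g x ∂μ) - a * cg) * s = s * ((∫ x, f x * g x ∂μ) - a * cg) :=
      mul_comm _ _
    _ ≤ _ := hkey
  calc (∫ x, f x * g x ∂μ) - a * cg
      ≤ (I / (2 * ρ) + a * (s ^ 2 * Mg ^ 2 / (2 * ρ))) / s := h2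
  _ = (I / (2 * ρ)) / s + (a * Mg ^ 2 / (2 * ρ)) * s := by
      field_simp

theorem cov_bdd (μ : Measure X) [IsProbabilityMeasure μ]
    (ρ : ℝ) (hρ : 0 < ρ) (hLSI : LSI μ ρ)
    (f g : X → ℝ) (hf0 : ∀ x, 0 ≤ f x) {Lf Lg : NNReal}
    (hfL : LipschitzWith Lf f) (hgL : LipschitzWith Lg g)
    (m B Mg : ℝ) (hfb : ∀ x, f x ≤ m) (hgb : ∀ x, |g x| ≤ B)
    (hMg0 : 0 ≤ Mg) (hMg : ∀ᵐ x ∂μ, ‖gradient g x‖ ≤ Mg) :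
    |∫ x, f x * g x ∂μ - (∫ x, f x ∂μ) * ∫ x, g x ∂μ|
      ≤ (Mg / ρ) * Real.sqrt ((∫ x, f x ∂μ) * ∫ x, ‖gradient f x‖ ^ 2 / f x ∂μ) := by
  have hfc : Continuous f := hfL.continuous
  have hgc : Continuous g := hgL.continuous
  have hfint : Integrable f μ := by
    apply (integrable_const m).mono' hfc.aestronglyMeasurable
    filter_upwards with x
    rw [Real.norm_eq_abs, abs_of_nonneg (hf0 x)]; exact hfb x
  have hgint : Integrable g μ := by
    apply (integrable_const B).mono' hgc.aestronglyMeasurable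
    filter_upwards with x
    rw [Real.norm_eq_abs]; exact hgb x
  set a : ℝ := ∫ x, f x ∂μ with haa
  set I : ℝ := ∫ x, ‖gradient f x‖ ^ 2 / f x ∂μ with hII
  have ha0 : 0 ≤ a := integral_nonneg hf0
  have hI0 : 0 ≤ I := integral_nonneg
    (fun x => div_nonneg (by positivity) (hf0 x))
  have hRHS0 : 0 ≤ (Mg / ρ) * Real.sqrt (a * I) := by positivity
  rcases eq_or_lt_of_le ha0 with ha | ha
  · -- a = 0 : f vanishes a.e.
    have hf_ae : f =ᵐ[μ] 0 := by
      rw [← integral_eq_zero_iff_of_nonneg hf0 hfint]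
      exact ha.symm
    have h1 : ∫ x, f x * g x ∂μ = 0 := by
      rw [integral_eq_zero_of_ae]
      filter_upwards [hf_ae] with x hx
      simp [hx]
    rw [h1, ← ha]
    simpa using hRHS0
  · -- a > 0
    have hup := fun (s : ℝ) (hs : 0 < s) =>
      cov_bdd_one_side μ ρ hρ hLSI f g hf0 hfL hgL m B Mg hfb hgb hMg0 hMg ha hs
    have hgradneg : ∀ x, ‖gradient (fun y => -g y) x‖ = ‖gradient g x‖ := by
      intro x
      rw [norm_gradient_eq, norm_gradient_eq, fderiv_fun_neg, norm_neg]
    have hdown := fun (s : ℝ) (hs : 0 < s) =>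
      cov_bdd_one_side μ ρ hρ hLSI f (fun y => -g y) hf0 hfL hgL.neg m B Mg hfb
        (fun x => by rw [abs_neg]; exact hgb x) hMg0
        (by filter_upwards [hMg] with x hx; rw [hgradneg]; exact hx) ha hs
    have hneg1 : ∫ x, f x * -g x ∂μ = -∫ x, f x * g x ∂μ := by
      rw [← integral_neg]
      congr 1; funext x; ring
    have hneg2 : ∫ x, -g x ∂μ = -∫ x, g x ∂μ := integral_neg g
    have habs : ∀ s : ℝ, 0 < s →
        |∫ x, f x * g x ∂μ - a * ∫ x, g x ∂μ|
          ≤ (I / (2 * ρ)) / s + (a * Mg ^ 2 / (2 * ρ)) * s := by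
      intro s hs
      rw [abs_le]
      constructor
      · have := hdown s hs
        rw [hneg1, hneg2] at this
        rw [← haa, ← hII] at this
        linarith
      · have := hup s hs
        rw [← haa, ← hII] at this
        linarith
    have hopt := le_two_sqrt_of_forall (Cv := |∫ x, f x * g x ∂μ - a * ∫ x, g x ∂μ|)
      (P := I / (2 * ρ)) (Q := a * Mg ^ 2 / (2 * ρ)) (by positivity) (by positivity) habs
    have heq : 2 * Real.sqrt ((I / (2 * ρ)) * (a * Mg ^ 2 / (2 * ρ)))
        = (Mg / ρ) * Real.sqrt (a * I) := by
      have e1 : (I / (2 * ρ)) * (a * Mg ^ 2 / (2 * ρ)) = (a * I) * (Mg / (2 * ρ)) ^ 2 := by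
        ring
      rw [e1, Real.sqrt_mul (by positivity), Real.sqrt_sq (by positivity)]
      ring
    rw [heq] at hopt
    exact hopt

/-- pointwise bound for the Fisher-information integrand of a truncation. -/
lemma grad_sq_div_min_le (f : X → ℝ) (hf : Continuous f) {m : ℝ} (hm : 0 < m)
    (x : X) (h0 : 0 ≤ f x) :
    ‖gradient (fun y => min (f y) m) x‖ ^ 2 / min (f x) m
      ≤ ‖gradient f x‖ ^ 2 / f x := by
  have hRHS0 : 0 ≤ ‖gradient f x‖ ^ 2 / f x := div_nonneg (by positivity) h0
  rcases lt_trichotomy (f x) m with h | h | h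
  · have hev : (fun y => min (f y) m) =ᶠ[nhds x] f := by
      filter_upwards [hf.continuousAt.eventually_lt_const h] with y hy
      exact min_eq_left hy.le
    rw [norm_gradient_eq, norm_gradient_eq, hev.fderiv_eq, min_eq_left h.le]
  · have hmax : IsLocalMax (fun y => min (f y) m) x := by
      apply Filter.Eventually.of_forall
      intro y
      show min (f y) m ≤ min (f x) m
      rw [h, min_self]
      exact min_le_right _ _
    rw [norm_gradient_eq, hmax.fderiv_eq_zero]
    simpa using hRHS0
  · have hev : (fun y => min (f y) m) =ᶠ[nhds x] (fun _ => m) := by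
      filter_upwards [hf.continuousAt.eventually_const_lt h] with y hy
      exact min_eq_right hy.le
    rw [norm_gradient_eq, hev.fderiv_eq, fderiv_fun_const]
    simpa using hRHS0

/-- clamp is dominated by the absolute value. -/
lemma abs_clamp_le (r : ℝ) {c : ℝ} (hc : 0 ≤ c) : |max (min r c) (-c)| ≤ |r| := by
  rw [abs_le]
  constructor
  · apply le_max_of_le_left
    exact le_min (neg_abs_le r) (le_trans (by simpa using abs_nonneg r) hc)
  · apply max_le
    · exact le_trans (min_le_left _ _) (le_abs_self r)
    · linarith [abs_nonneg r]

/-- covariance estimate under a logarithmic Sobolev inequality. -/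
theorem covariance_estimate_of_LSI (μ : Measure X) [IsProbabilityMeasure μ]
    (ρ : ℝ) (hρ : 0 < ρ) (hLSI : LSI μ ρ)
    (f g : X → ℝ) (hf0 : ∀ x, 0 ≤ f x)
    (Lf Lg : NNReal) (hfL : LipschitzWith Lf f) (hgL : LipschitzWith Lg g)
    (Mg : ℝ) (hMg : ∀ᵐ x ∂μ, ‖gradient g x‖ ≤ Mg)
    (hfint : Integrable f μ) (hgint : Integrable g μ)
    (hfg : Integrable (fun x => f x * g x) μ)
    (hgradf : Integrable (fun x => ‖gradient f x‖ ^ 2 / f x) μ) :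
    |∫ x, f x * g x ∂μ - (∫ x, f x ∂μ) * ∫ x, g x ∂μ|
      ≤ (Mg / ρ) * Real.sqrt ((∫ x, f x ∂μ) * ∫ x, ‖gradient f x‖ ^ 2 / f x ∂μ) := by
  have hMg0 : 0 ≤ Mg := by
    rcases hMg.exists with ⟨x, hx⟩
    exact le_trans (norm_nonneg _) hx
  have hfc : Continuous f := hfL.continuous
  have hgc : Continuous g := hgL.continuous
  set a : ℝ := ∫ x, f x ∂μ with haa
  set I : ℝ := ∫ x, ‖gradient f x‖ ^ 2 / f x ∂μ with hII
  have ha0 : 0 ≤ a := integral_nonneg hf0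
  have hI0 : 0 ≤ I := integral_nonneg (fun x => div_nonneg (by positivity) (hf0 x))
  set RHS : ℝ := (Mg / ρ) * Real.sqrt (a * I) with hRHS
  set F : ℕ → X → ℝ := fun m x => min (f x) ((m : ℝ) + 1) with hF
  set G : ℕ → X → ℝ := fun n x => max (min (g x) ((n : ℝ) + 1)) (-((n : ℝ) + 1)) with hG
  have hFcont : ∀ m, Continuous (F m) := fun m => hfc.min continuous_const
  have hGcont : ∀ n, Continuous (G n) := fun n => (hgc.min continuous_const).max continuous_const
  have hF0 : ∀ m x, 0 ≤ F m x := fun m x => le_min (hf0 x) (by positivity)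
  have hFle : ∀ m x, F m x ≤ f x := fun m x => min_le_left _ _
  have hFint : ∀ m, Integrable (F m) μ := by
    intro m
    apply hfint.mono (hFcont m).aestronglyMeasurable
    filter_upwards with x
    rw [Real.norm_eq_abs, Real.norm_eq_abs, abs_of_nonneg (hF0 m x), abs_of_nonneg (hf0 x)]
    exact hFle m x
  have hGabs : ∀ n x, |G n x| ≤ |g x| := fun n x => abs_clamp_le (g x) (by positivity)
  have hGint : ∀ n, Integrable (G n) μ := by
    intro n
    apply hgint.mono (hGcont n).aestronglyMeasurable
    filter_upwards with x
    rw [Real.norm_eq_abs, Real.norm_eq_abs]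
    exact hGabs n x
  -- Fisher information of truncations
  have hIm_meas : ∀ m, AEStronglyMeasurable (fun x => ‖gradient (F m) x‖ ^ 2 / F m x) μ := by
    intro m
    exact (((measurable_norm_gradient (F m)).pow_const 2).div
      (hFcont m).measurable).aestronglyMeasurable
  have hIm_ptle : ∀ m x, ‖gradient (F m) x‖ ^ 2 / F m x ≤ ‖gradient f x‖ ^ 2 / f x :=
    fun m x => grad_sq_div_min_le f hfc (by positivity) x (hf0 x)
  have hIm_0 : ∀ m x, 0 ≤ ‖gradient (F m) x‖ ^ 2 / F m x :=
    fun m x => div_nonneg (by positivity) (hF0 m x)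
  have hIm_int : ∀ m, Integrable (fun x => ‖gradient (F m) x‖ ^ 2 / F m x) μ := by
    intro m
    apply hgradf.mono (hIm_meas m)
    filter_upwards with x
    rw [Real.norm_eq_abs, Real.norm_eq_abs, abs_of_nonneg (hIm_0 m x),
      abs_of_nonneg (div_nonneg (by positivity) (hf0 x))]
    exact hIm_ptle m x
  have hIm_le : ∀ m, ∫ x, ‖gradient (F m) x‖ ^ 2 / F m x ∂μ ≤ I :=
    fun m => integral_mono (hIm_int m) hgradf (fun x => hIm_ptle m x)
  have ham_le : ∀ m, ∫ x, F m x ∂μ ≤ a :=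
    fun m => integral_mono (hFint m) hfint (fun x => hFle m x)
  have ham_0 : ∀ m, 0 ≤ ∫ x, F m x ∂μ := fun m => integral_nonneg (hF0 m)
  have hIm_int0 : ∀ m, 0 ≤ ∫ x, ‖gradient (F m) x‖ ^ 2 / F m x ∂μ :=
    fun m => integral_nonneg (hIm_0 m)
  -- step 1 : estimate for doubly truncated pair
  have step1 : ∀ m n : ℕ,
      |∫ x, F m x * G n x ∂μ - (∫ x, F m x ∂μ) * ∫ x, G n x ∂μ| ≤ RHS := by
    intro m n
    have hFmL : LipschitzWith (max Lf 0) (F m) := hfL.min (LipschitzWith.const _)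
    have hGnL : LipschitzWith (max (max Lg 0) 0) (G n) :=
      (hgL.min (LipschitzWith.const _)).max (LipschitzWith.const _)
    have hGnb : ∀ x, |G n x| ≤ (n : ℝ) + 1 := by
      intro x
      rw [abs_le]
      refine ⟨le_max_right _ _, max_le (min_le_right _ _) ?_⟩
      have : (0:ℝ) ≤ (n : ℝ) := Nat.cast_nonneg n
      linarith
    have hMgn : ∀ᵐ x ∂μ, ‖gradient (G n) x‖ ≤ Mg := by
      filter_upwards [hMg] with x hx
      exact le_trans (norm_gradient_trunc_le g hgc (by positivity) x) hx
    have h1 := cov_bdd μ ρ hρ hLSI (F m) (G n) (hF0 m) hFmL hGnL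
      ((m : ℝ) + 1) ((n : ℝ) + 1) Mg (fun x => min_le_right _ _) hGnb hMg0 hMgn
    apply le_trans h1
    rw [hRHS]
    apply mul_le_mul_of_nonneg_left _ (by positivity)
    apply Real.sqrt_le_sqrt
    exact mul_le_mul (ham_le m) (hIm_le m) (hIm_int0 m) ha0
  -- step 2 : limit in n
  have step2 : ∀ m : ℕ,
      |∫ x, F m x * g x ∂μ - (∫ x, F m x ∂μ) * ∫ x, g x ∂μ| ≤ RHS := by
    intro m
    have hGlim : ∀ x, Filter.Tendsto (fun n => G n x) Filter.atTop (nhds (g x)) := by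
      intro x
      obtain ⟨N, hN⟩ := exists_nat_ge (|g x|)
      apply tendsto_atTop_of_eventually_const (i₀ := N)
      intro n hn
      have h1 : |g x| ≤ (n : ℝ) + 1 := by
        calc |g x| ≤ (N : ℝ) := hN
        _ ≤ (n : ℝ) := Nat.cast_le.mpr hn
        _ ≤ (n : ℝ) + 1 := by linarith
      rw [hG]
      simp only []
      rw [min_eq_left (le_trans (le_abs_self _) h1),
        max_eq_left (by linarith [neg_abs_le (g x)])]
    have hconv1 : Filter.Tendsto (fun n => ∫ x, F m x * G n x ∂μ) Filter.atTop
        (nhds (∫ x, F m x * g x ∂μ)) := by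
      apply tendsto_integral_of_dominated_convergence (fun x => ((m : ℝ) + 1) * |g x|)
      · intro n
        exact ((hFcont m).mul (hGcont n)).aestronglyMeasurable
      · exact hgint.abs.const_mul _
      · intro n
        filter_upwards with x
        rw [Real.norm_eq_abs, abs_mul]
        apply mul_le_mul _ (hGabs n x) (abs_nonneg _) (by positivity)
        rw [abs_of_nonneg (hF0 m x)]
        exact min_le_right _ _
      · filter_upwards with x
        exact (tendsto_const_nhds.mul (hGlim x))
    have hconv2 : Filter.Tendsto (fun n => ∫ x, G n x ∂μ) Filter.atTop
        (nhds (∫ x, g x ∂μ)) := by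
      apply tendsto_integral_of_dominated_convergence (fun x => |g x|)
      · intro n; exact (hGcont n).aestronglyMeasurable
      · exact hgint.abs
      · intro n
        filter_upwards with x
        rw [Real.norm_eq_abs]
        exact hGabs n x
      · filter_upwards with x
        exact hGlim x
    have hconv : Filter.Tendsto
        (fun n => |∫ x, F m x * G n x ∂μ - (∫ x, F m x ∂μ) * ∫ x, G n x ∂μ|)
        Filter.atTop
        (nhds (|∫ x, F m x * g x ∂μ - (∫ x, F m x ∂μ) * ∫ x, g x ∂μ|)) :=
      (hconv1.sub (hconv2.const_mul _)).abs
    exact le_of_tendsto hconv (Filter.Eventually.of_forall (fun n => step1 m n))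
  -- step 3 : limit in m
  have hFlim : ∀ x, Filter.Tendsto (fun m => F m x) Filter.atTop (nhds (f x)) := by
    intro x
    obtain ⟨N, hN⟩ := exists_nat_ge (f x)
    apply tendsto_atTop_of_eventually_const (i₀ := N)
    intro m hm
    have h1 : f x ≤ (m : ℝ) + 1 := by
      calc f x ≤ (N : ℝ) := hN
      _ ≤ (m : ℝ) := Nat.cast_le.mpr hm
      _ ≤ (m : ℝ) + 1 := by linarith
    rw [hF]
    simp only []
    rw [min_eq_left h1]
  have hconv3 : Filter.Tendsto (fun m => ∫ x, F m x * g x ∂μ) Filter.atTop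
      (nhds (∫ x, f x * g x ∂μ)) := by
    apply tendsto_integral_of_dominated_convergence (fun x => |f x * g x|)
    · intro m; exact ((hFcont m).mul hgc).aestronglyMeasurable
    · exact hfg.abs
    · intro m
      filter_upwards with x
      rw [Real.norm_eq_abs, abs_mul, abs_mul, abs_of_nonneg (hF0 m x), abs_of_nonneg (hf0 x)]
      exact mul_le_mul_of_nonneg_right (hFle m x) (abs_nonneg _)
    · filter_upwards with x
      exact (hFlim x).mul tendsto_const_nhds
  have hconv4 : Filter.Tendsto (fun m => ∫ x, F m x ∂μ) Filter.atTop (nhds a) := by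
    apply tendsto_integral_of_dominated_convergence f
    · intro m; exact (hFcont m).aestronglyMeasurable
    · exact hfint
    · intro m
      filter_upwards with x
      rw [Real.norm_eq_abs, abs_of_nonneg (hF0 m x)]
      exact hFle m x
    · filter_upwards with x
      exact hFlim x
  have hconv : Filter.Tendsto
      (fun m => |∫ x, F m x * g x ∂μ - (∫ x, F m x ∂μ) * ∫ x, g x ∂μ|)
      Filter.atTop
      (nhds (|∫ x, f x * g x ∂μ - a * ∫ x, g x ∂μ|)) :=
    (hconv3.sub (hconv4.mul tendsto_const_nhds)).abs
  exact le_of_tendsto hconv (Filter.Eventually.of_forall step2)
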